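/- Let g : ℝ → ℝ be C^{1,1}, let [a,b] ⊆ ℝ and ū ∈ [a,b] be a point where conv_{[a,b]} g (ū) = g(ū). Then for all u ∈ [a, ū] with u < ū, the secant slope of g over [u, ū] is at most the secant slope over [u, b]: (g(ū) − g(u))/(ū − u) ≤ (g(b) − g(u))/(b − u); and for all u ∈ [ū, b] with ū < u, (g(u) − g(ū))/(u − ū) ≥ (g(u) − g(a))/(u − a). -/

import Mathlib

open Set

/-- The convex envelope of `g` on the interval `[a,b]`: the pointwise supremum of all
convex functions on `[a,b]` lying below `g` on `[a,b]`. -/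
noncomputable def convEnv (a b : ℝ) (g : ℝ → ℝ) : ℝ → ℝ :=
  fun u => sSup {y : ℝ | ∃ h : ℝ → ℝ, ConvexOn ℝ (Set.Icc a b) h ∧
    (∀ x ∈ Set.Icc a b, h x ≤ g x) ∧ y = h u}

lemma convEnv_chord (g : ℝ → ℝ) (hg : Continuous g) {a b : ℝ} (hab : a ≤ b)
    {x y : ℝ} (hx : x ∈ Set.Icc a b) (hy : y ∈ Set.Icc a b)
    {s t : ℝ} (hs : 0 ≤ s) (ht : 0 ≤ t) (hst : s + t = 1) :
    convEnv a b g (s * x + t * y) ≤ s * g x + t * g y := by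
  apply csSup_le
  · obtain ⟨c, hc, hcmin⟩ := isCompact_Icc.exists_isMinOn (Set.nonempty_Icc.2 hab)
      hg.continuousOn
    exact ⟨g c, fun _ => g c, convexOn_const (g c) (convex_Icc a b),
      fun z hz => hcmin hz, rfl⟩
  · rintro _ ⟨h, hconv, hle, rfl⟩
    calc h (s * x + t * y) ≤ s * h x + t * h y := hconv.2 hx hy hs ht hst
      _ ≤ s * g x + t * g y := by
          have := hle x hx; have := hle y hy; nlinarith

theorem stmt10 (g : ℝ → ℝ) (M : NNReal) (hg : Differentiable ℝ g)
    (hM : LipschitzWith M (deriv g)) (a b ubar : ℝ)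
    (hub : ubar ∈ Set.Icc a b)
    (hcontact : convEnv a b g ubar = g ubar) :
    (∀ u ∈ Set.Icc a ubar, u < ubar →
        (g ubar - g u) / (ubar - u) ≤ (g b - g u) / (b - u)) ∧
    (∀ u ∈ Set.Icc ubar b, ubar < u →
        (g u - g a) / (u - a) ≤ (g u - g ubar) / (u - ubar)) := by
  obtain ⟨ha, hb⟩ := hub
  have hab : a ≤ b := le_trans ha hb
  have hgc : Continuous g := hg.continuous
  constructor
  · intro u hu hlt
    have hbu : (0:ℝ) < b - u := by linarith [hu.2]
    set s : ℝ := (b - ubar) / (b - u) with hs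
    set t : ℝ := (ubar - u) / (b - u) with ht
    have hs0 : 0 ≤ s := div_nonneg (by linarith) hbu.le
    have ht0 : 0 ≤ t := div_nonneg (by linarith) hbu.le
    have hst : s + t = 1 := by rw [hs, ht]; field_simp; ring
    have hcomb : s * u + t * b = ubar := by rw [hs, ht]; field_simp; try ring
    have key := convEnv_chord g hgc hab ⟨hu.1, le_trans hu.2 hb⟩
      ⟨hab, le_refl b⟩ hs0 ht0 hst
    rw [hcomb, hcontact] at key
    have key' : g ubar * (b - u) ≤ (b - ubar) * g u + (ubar - u) * g b := by
      have h1 := mul_le_mul_of_nonneg_right key hbu.le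
      have h2 : (s * g u + t * g b) * (b - u) = (b - ubar) * g u + (ubar - u) * g b := by
        rw [hs, ht]; field_simp; try ring
      rw [h2] at h1; exact h1
    rw [div_le_div_iff₀ (by linarith : (0:ℝ) < ubar - u) hbu]
    nlinarith [key']
  · intro u hu hlt
    have hua : (0:ℝ) < u - a := by linarith [hu.1]
    set s : ℝ := (u - ubar) / (u - a) with hs
    set t : ℝ := (ubar - a) / (u - a) with ht
    have hs0 : 0 ≤ s := div_nonneg (by linarith) hua.le
    have ht0 : 0 ≤ t := div_nonneg (by linarith) hua.le
    have hst : s + t = 1 := by rw [hs, ht]; field_simp; ring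
    have hcomb : s * a + t * u = ubar := by rw [hs, ht]; field_simp; try ring
    have key := convEnv_chord g hgc hab ⟨le_refl a, hab⟩
      ⟨le_trans ha hu.1, hu.2⟩ hs0 ht0 hst
    rw [hcomb, hcontact] at key
    have key' : g ubar * (u - a) ≤ (u - ubar) * g a + (ubar - a) * g u := by
      have h1 := mul_le_mul_of_nonneg_right key hua.le
      have h2 : (s * g a + t * g u) * (u - a) = (u - ubar) * g a + (ubar - a) * g u := by
        rw [hs, ht]; field_simp; try ring
      rw [h2] at h1; exact h1
    rw [div_le_div_iff₀ hua (by linarith : (0:ℝ) < u - ubar)]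
    nlinarith [key']
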